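/- Let n be a positive integer, let a₁, …, a_n be nonzero real numbers, and let u ∈ ℝ with u ≠ 0. Then the number of sign vectors ε ∈ {-1,1}^n satisfying ∑_{k=1}^{n} a_k ε_k = u is at most 2^n · P(n+1) = (1/2) · binom(n+1, ⌊(n+1)/2⌋). Equivalently, if ξ₁, …, ξ_n are independent uniform ±1 random variables, then ℙ(∑_{k=1}^{n} a_k ξ_k = u) ≤ P(n+1). -/

import Mathlib

/-- `P n = 2^(-n) * binom(n, ⌊n/2⌋)`, the bound in the Littlewood–Offord lemma. -/
noncomputable def littlewoodOffordBound (n : ℕ) : ℝ :=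
  (2 : ℝ) ^ (-(n : ℤ)) * (n.choose (n / 2) : ℝ)

open Finset

/-- Erdős's form of the Littlewood–Offord lemma, proved via Sperner's theorem. -/
lemma erdos_LO (m : ℕ) (b : Fin m → ℝ) (hb : ∀ k, b k ≠ 0) (c : ℝ) :
    Nat.card {ε : Fin m → Bool //
        (∑ k, b k * (if ε k then (1 : ℝ) else -1)) = c} ≤ m.choose (m / 2) := by
  classical
  set f : (Fin m → Bool) → Finset (Fin m) :=
    fun ε => Finset.univ.filter (fun k => ε k ≠ decide (b k < 0)) with hf
  have hsum : ∀ ε : Fin m → Bool,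
      (∑ k, b k * (if ε k then (1 : ℝ) else -1))
        = 2 * (∑ k ∈ f ε, |b k|) - ∑ k, |b k| := by
    intro ε
    have h1 : (∑ k, b k * (if ε k then (1 : ℝ) else -1))
        = ∑ k, ((if k ∈ f ε then 2 * |b k| else 0) - |b k|) := by
      refine Finset.sum_congr rfl ?_
      intro k _
      simp only [hf, Finset.mem_filter, Finset.mem_univ, true_and]
      rcases lt_or_gt_of_ne (hb k) with hk | hk
      · cases hε : ε k <;> simp [hε, hk, abs_of_neg hk] <;> ring
      · cases hε : ε k <;> simp [hε, hk.le, not_lt.mpr hk.le, abs_of_pos hk] <;> ring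
    rw [h1, Finset.sum_sub_distrib, Finset.sum_ite_mem, Finset.univ_inter,
      Finset.mul_sum]
  -- The solution family of subsets is an antichain.
  set 𝒜 : Finset (Finset (Fin m)) :=
    Finset.univ.filter (fun S => 2 * (∑ k ∈ S, |b k|) - ∑ k, |b k| = c) with h𝒜
  have hmono : ∀ S T : Finset (Fin m), S ⊂ T →
      (∑ k ∈ S, |b k|) < ∑ k ∈ T, |b k| := by
    intro S T hST
    obtain ⟨i, hiT, hiS⟩ := Finset.exists_of_ssubset hST
    exact Finset.sum_lt_sum_of_subset hST.subset hiT hiS (abs_pos.mpr (hb i))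
      (fun j _ _ => abs_nonneg _)
  have hanti : IsAntichain (· ⊆ ·) (𝒜 : Set (Finset (Fin m))) := by
    intro S hS T hT hne hsub
    simp only [h𝒜, Finset.coe_filter, Set.mem_setOf_eq] at hS hT
    have : (∑ k ∈ S, |b k|) < ∑ k ∈ T, |b k| :=
      hmono S T (lt_of_le_of_ne hsub (fun h => hne (by exact_mod_cast h)))
    have := hS.2.trans hT.2.symm
    linarith
  have hcard : 𝒜.card ≤ m.choose (m / 2) := by
    have := IsAntichain.sperner hanti
    simpa using this
  -- inject the solutions into 𝒜
  refine le_trans ?_ hcard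
  have : Nat.card {S : Finset (Fin m) // S ∈ 𝒜} = 𝒜.card := by
    simp [Nat.card_eq_fintype_card]
  rw [← this]
  refine Nat.card_le_card_of_injective
    (fun ε => ⟨f ε.1, by
      simp only [h𝒜, Finset.mem_filter, Finset.mem_univ, true_and]
      rw [← hsum ε.1]; exact ε.2⟩) ?_
  rintro ⟨ε, hε⟩ ⟨ε', hε'⟩ h
  simp only [Subtype.mk.injEq] at h ⊢
  funext k
  have hk : k ∈ f ε ↔ k ∈ f ε' := by rw [h]
  simp only [hf, Finset.mem_filter, Finset.mem_univ, true_and] at hk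
  cases hd : decide (b k < 0) <;> cases h1 : ε k <;> cases h2 : ε' k <;> simp_all

theorem littlewood_offord_nonzero_target (n : ℕ) (hn : 1 ≤ n) (a : Fin n → ℝ)
    (ha : ∀ k, a k ≠ 0) (u : ℝ) (hu : u ≠ 0) :
    (Nat.card {ε : Fin n → Bool //
        (∑ k, a k * (if ε k then (1 : ℝ) else -1)) = u} : ℝ) ≤
      (1 / 2 : ℝ) * ((n + 1).choose ((n + 1) / 2) : ℝ) ∧
    (Nat.card {ε : Fin n → Bool //
        (∑ k, a k * (if ε k then (1 : ℝ) else -1)) = u} : ℝ) / 2 ^ n ≤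
      littlewoodOffordBound (n + 1) := by
  classical
  set b : Fin (n + 1) → ℝ := Fin.snoc a u with hb
  have hbne : ∀ k, b k ≠ 0 := by
    intro k
    refine Fin.lastCases ?_ ?_ k
    · simpa [hb] using hu
    · intro i; simpa [hb] using ha i
  set X := {ε : Fin n → Bool // (∑ k, a k * (if ε k then (1 : ℝ) else -1)) = u}
    with hX
  set Y := {η : Fin (n + 1) → Bool //
      (∑ k, b k * (if η k then (1 : ℝ) else -1)) = 0} with hY
  have key : 2 * Nat.card X ≤ (n + 1).choose ((n + 1) / 2) := by
    have hY' := erdos_LO (n + 1) b hbne 0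
    have hsum1 : ∀ ε : Fin n → Bool, (∑ k, a k * (if ε k then (1 : ℝ) else -1)) = u →
        (∑ k, b k * (if (Fin.snoc ε false : Fin (n+1) → Bool) k then (1 : ℝ) else -1)) = 0 := by
      intro ε hε
      rw [Fin.sum_univ_castSucc]
      simp only [hb, Fin.snoc_castSucc, Fin.snoc_last]
      rw [hε]
      norm_num
    have hsum2 : ∀ ε : Fin n → Bool, (∑ k, a k * (if ε k then (1 : ℝ) else -1)) = u →
        (∑ k, b k * (if (Fin.snoc (fun j => !(ε j)) true : Fin (n+1) → Bool) k
          then (1 : ℝ) else -1)) = 0 := by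
      intro ε hε
      rw [Fin.sum_univ_castSucc]
      simp only [hb, Fin.snoc_castSucc, Fin.snoc_last]
      have h2 : (∑ k, a k * (if !(ε k) then (1 : ℝ) else -1))
          = -∑ k, a k * (if ε k then (1 : ℝ) else -1) := by
        rw [← Finset.sum_neg_distrib]
        refine Finset.sum_congr rfl fun k _ => ?_
        cases hk : ε k <;> simp [hk] <;> ring
      rw [h2, hε]
      norm_num
    calc 2 * Nat.card X = Nat.card (X × Bool) := by
          rw [Nat.card_prod]; simp [Nat.card_eq_fintype_card]; ring
      _ ≤ Nat.card Y := Nat.card_le_card_of_injective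
          (fun p : X × Bool =>
            if p.2 = true then (⟨Fin.snoc p.1.1 false, hsum1 p.1.1 p.1.2⟩ : Y)
            else ⟨Fin.snoc (fun j => !(p.1.1 j)) true, hsum2 p.1.1 p.1.2⟩) (by
        rintro ⟨⟨ε, hε⟩, t⟩ ⟨⟨ε', hε'⟩, t'⟩ h
        cases t <;> cases t' <;>
          simp only [Bool.false_eq_true, if_true, if_false] at h <;>
          replace h := congrArg Subtype.val h
        · have hee : ε = ε' := funext fun j => by
            have h3 := congrFun h (Fin.castSucc j)
            simp only [Fin.snoc_castSucc] at h3
            cases h1 : ε j <;> cases h2 : ε' j <;> simp_all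
          simp [hee]
        · have h3 := congrFun h (Fin.last n); simp at h3
        · have h3 := congrFun h (Fin.last n); simp at h3
        · have hee : ε = ε' := funext fun j => by
            have h3 := congrFun h (Fin.castSucc j)
            simpa using h3
          simp [hee])
      _ ≤ (n + 1).choose ((n + 1) / 2) := hY'
  have keyR : 2 * (Nat.card X : ℝ) ≤ ((n + 1).choose ((n + 1) / 2) : ℝ) := by
    exact_mod_cast key
  constructor
  · linarith
  · have hpow : littlewoodOffordBound (n + 1)
        = ((n + 1).choose ((n + 1) / 2) : ℝ) / 2 ^ (n + 1) := by
      rw [littlewoodOffordBound, zpow_neg, zpow_natCast]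
      ring
    rw [hpow, div_le_div_iff₀ (by positivity) (by positivity), pow_succ]
    nlinarith [pow_pos (show (0:ℝ) < 2 by norm_num) n]
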